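/- Let 0 < t₀ ≤ t₁ and C ≥ 0, and let N be a real-valued differentiable function on [t₀, t₁] with N'(s) ≤ N(s)·(1 − N(s))/s + C·s for all s ∈ [t₀, t₁]. Then for every u ∈ [t₀, t₁], N(u) ≤ 1 + C·u·(u − t₀) + (N(t₀) − 1)·t₀/u. -/

import Mathlib

/-- If `N' ≤ N(1−N)/s + C·s` on `[t₀,t₁]` with `0 < t₀ ≤ t₁`, `C ≥ 0`,
then `N(u) ≤ 1 + C·u·(u − t₀) + (N(t₀) − 1)·t₀/u` for all `u ∈ [t₀,t₁]`. -/
theorem stmt_5 (t₀ t₁ C : ℝ) (ht₀ : 0 < t₀) (ht : t₀ ≤ t₁) (hC : 0 ≤ C) (N N' : ℝ → ℝ)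
    (hderiv : ∀ s ∈ Set.Icc t₀ t₁, HasDerivWithinAt N (N' s) (Set.Icc t₀ t₁) s)
    (hineq : ∀ s ∈ Set.Icc t₀ t₁, N' s ≤ N s * (1 - N s) / s + C * s) :
    ∀ u ∈ Set.Icc t₀ t₁, N u ≤ 1 + C * u * (u - t₀) + (N t₀ - 1) * t₀ / u := by
  intro u hu
  set g : ℝ → ℝ := fun x => (N x - 1) * x - C * (x ^ 2 * (x - t₀)) with hg
  set g' : ℝ → ℝ := fun x => (N' x * x + (N x - 1)) - C * (3 * x ^ 2 - 2 * t₀ * x) with hg'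
  have hgderiv : ∀ x ∈ Set.Icc t₀ t₁, HasDerivWithinAt g (g' x) (Set.Icc t₀ t₁) x := by
    intro x hx
    have h1 : HasDerivWithinAt (fun x => (N x - 1) * x) (N' x * x + (N x - 1) * 1)
        (Set.Icc t₀ t₁) x := ((hderiv x hx).sub_const 1).mul (hasDerivWithinAt_id x _)
    have h2 : HasDerivWithinAt (fun x : ℝ => C * (x ^ 2 * (x - t₀)))
        (C * (3 * x ^ 2 - 2 * t₀ * x)) (Set.Icc t₀ t₁) x := by
      have : HasDerivAt (fun x : ℝ => C * (x ^ 2 * (x - t₀)))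
          (C * (3 * x ^ 2 - 2 * t₀ * x)) x := by
        have := ((hasDerivAt_pow 2 x).mul ((hasDerivAt_id x).sub_const t₀)).const_mul C
        exact this.congr_deriv (by simp only [id_eq]; ring)
      exact this.hasDerivWithinAt
    have := h1.sub h2
    exact this.congr_deriv (by simp only [hg']; ring)
  have hanti : AntitoneOn g (Set.Icc t₀ t₁) := by
    apply antitoneOn_of_hasDerivWithinAt_nonpos (convex_Icc t₀ t₁)
      (fun x hx => (hgderiv x hx).continuousWithinAt)
      (fun x hx => (hgderiv x (interior_subset hx)).mono interior_subset)
    intro x hx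
    rw [interior_Icc] at hx
    have hxm : x ∈ Set.Icc t₀ t₁ := Set.mem_Icc_of_Ioo hx
    have hx0 : 0 < x := lt_of_lt_of_le ht₀ hxm.1
    have h := hineq x hxm
    have hNx : N' x * x ≤ N x * (1 - N x) + C * x * x := by
      have := mul_le_mul_of_nonneg_right h hx0.le
      calc N' x * x ≤ (N x * (1 - N x) / x + C * x) * x := this
        _ = N x * (1 - N x) + C * x * x := by field_simp
    have key : g' x ≤ -(N x - 1) ^ 2 - C * (2 * x ^ 2 - 2 * t₀ * x) := by
      simp only [hg']; nlinarith
    have h1 : 0 ≤ C * (2 * x ^ 2 - 2 * t₀ * x) := by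
      have h2 : 0 ≤ 2 * x ^ 2 - 2 * t₀ * x := by nlinarith [hxm.1, hx0]
      exact mul_nonneg hC h2
    nlinarith [sq_nonneg (N x - 1)]
  have hgu : g u ≤ g t₀ := hanti (Set.left_mem_Icc.2 ht) hu hu.1
  have hu0 : 0 < u := lt_of_lt_of_le ht₀ hu.1
  have : (N u - 1) * u - C * (u ^ 2 * (u - t₀)) ≤ (N t₀ - 1) * t₀ := by
    simpa [hg] using hgu
  have hfin : N u - (1 + C * u * (u - t₀)) ≤ (N t₀ - 1) * t₀ / u := by
    rw [le_div_iff₀ hu0]; nlinarith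
  linarith
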